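/- Let n ≥ 3 and let d be a metric on S_n satisfying Axiom A.3. Then (S_n, d) cannot be isometrically embedded into any strictly convex real normed linear space; i.e., there is no real normed vector space E that is strictly convex together with a map f : S_n → E satisfying ‖f(σ) − f(π)‖ = d(σ,π) for all σ, π ∈ S_n. -/
import Mathlib


open Finset

noncomputable section

/-- `i >_σ j`: candidate `i` is ranked above candidate `j` by `σ`
(where `σ i` is the candidate in position `i`). -/
def prefOver {n : ℕ} (σ : Equiv.Perm (Fin n)) (i j : Fin n) : Prop :=
  σ.symm i < σ.symm j

/-- `M(S,σ)`: the set of `>_σ`-maximal elements of `S` (a singleton when `S ≠ ∅`). -/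
def bestSet {n : ℕ} (σ : Equiv.Perm (Fin n)) (S : Finset (Fin n)) : Finset (Fin n) :=
  S.filter fun x => ∀ y ∈ S, σ.symm x ≤ σ.symm y

/-- `△_S(σ,π) = M(S,σ) △ M(S,π)`. -/
def topDiff {n : ℕ} (σ π : Equiv.Perm (Fin n)) (S : Finset (Fin n)) : Finset (Fin n) :=
  symmDiff (bestSet σ S) (bestSet π S)

/-- The `(β,μ)`-top-difference distance; `β i` is the weight of menus of size `i+2`. -/
def dTD (n : ℕ) (β : Fin (n - 1) → ℝ) (μ : Fin n → ℝ)
    (σ π : Equiv.Perm (Fin n)) : ℝ :=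
  ∑ S ∈ Finset.univ.filter (fun S : Finset (Fin n) => 2 ≤ S.card),
    (if h : S.card - 2 < n - 1 then β ⟨S.card - 2, h⟩ else 0) *
      ∑ x ∈ topDiff σ π S, μ x

def IsSemimetric {α : Type*} (d : α → α → ℝ) : Prop :=
  (∀ x y, 0 ≤ d x y) ∧ (∀ x y, d x y = d y x) ∧ (∀ x, d x x = 0) ∧
    (∀ x y z, d x z ≤ d x y + d y z)

def IsMetricFn {α : Type*} (d : α → α → ℝ) : Prop :=
  IsSemimetric d ∧ ∀ x y, d x y = 0 → x = y

/-- `ω` is between `σ` and `π`: whenever `σ` and `π` agree on a pair, so does `ω`. -/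
def Between {n : ℕ} (σ ω π : Equiv.Perm (Fin n)) : Prop :=
  ∀ i j : Fin n, i ≠ j →
    (σ.symm i < σ.symm j ∧ π.symm i < π.symm j) → ω.symm i < ω.symm j

/-- The inversion set `I(σ,π) = {(i,j) : i >_σ j and i <_π j}`. -/
def inversions {n : ℕ} (σ π : Equiv.Perm (Fin n)) : Finset (Fin n × Fin n) :=
  Finset.univ.filter fun p => σ.symm p.1 < σ.symm p.2 ∧ π.symm p.2 < π.symm p.1

/-- Axiom A.1. -/
def AxA1 {n : ℕ} (d : Equiv.Perm (Fin n) → Equiv.Perm (Fin n) → ℝ) : Prop :=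
  ∀ σ ω π : Equiv.Perm (Fin n), Between σ ω π → d π σ = d π ω + d ω σ

/-- Kendall distance. -/
def kendall {n : ℕ} (σ π : Equiv.Perm (Fin n)) : ℕ := (inversions σ π).card

/-- The adjacent transposition of positions `a` and `a+1` (0-based). -/
def adjT (n : ℕ) (a : ℕ) : Equiv.Perm (Fin n) :=
  if h : a + 1 < n then Equiv.swap ⟨a, Nat.lt_of_succ_lt h⟩ ⟨a + 1, h⟩ else 1

/-- `L ∈ T(σ,π)`: a list of (0-based) positions of adjacent transpositions, of length
`d_K(σ,π)`, transforming `σ` into `π` by right multiplication. -/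
def IsAdjPath {n : ℕ} (σ π : Equiv.Perm (Fin n)) (L : List ℕ) : Prop :=
  (∀ a ∈ L, a + 1 < n) ∧ L.length = kendall σ π ∧ σ * (L.map (adjT n)).prod = π

/-- The cost of a path starting at `σ`: at each step the swap occurs at position `a`
(0-based) and exchanges the candidates `τ a` and `τ (a+1)` of the current ranking `τ`. -/
def pathCost {n : ℕ} (g : ℕ → Fin n → Fin n → ℝ) :
    Equiv.Perm (Fin n) → List ℕ → ℝ
  | _, [] => 0
  | σ, a :: L =>
      (if h : a + 1 < n then g a (σ ⟨a, Nat.lt_of_succ_lt h⟩) (σ ⟨a + 1, h⟩) else 0)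
        + pathCost g (σ * adjT n a) L

/-- Axiom A.3. -/
def AxA3 {n : ℕ} (d : Equiv.Perm (Fin n) → Equiv.Perm (Fin n) → ℝ) : Prop :=
  ∀ σ π : Equiv.Perm (Fin n), 2 ≤ kendall σ π →
    ∃ ω : Equiv.Perm (Fin n), ω ≠ σ ∧ ω ≠ π ∧ Between σ ω π ∧
      d σ π = d σ ω + d ω π

section MyAux

variable {n : ℕ}

lemma myAuxFix (hn : 3 ≤ n) (g : Fin n → Fin n) (hg : Function.Injective g)
    (H : ∀ i j : Fin n, i < j → 3 ≤ (j : ℕ) → g i < g j) :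
    (∀ j : Fin n, 3 ≤ (j : ℕ) → g j = j) ∧
      (∀ i : Fin n, (i : ℕ) < 3 → ((g i : Fin n) : ℕ) < 3) := by
  have h1 : ∀ j : Fin n, 3 ≤ (j : ℕ) → g j = j := by
    intro j hj
    have hle : (j : ℕ) ≤ ((g j : Fin n) : ℕ) := by
      have hmaps : ∀ i ∈ Finset.Iio j, g i ∈ Finset.Iio (g j) := by
        intro i hi
        rw [Finset.mem_Iio] at hi ⊢
        exact H i j hi hj
      have hcard := Finset.card_le_card_of_injOn g hmaps hg.injOn
      simpa [Fin.card_Iio] using hcard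
    have hge : n - 1 - (j : ℕ) ≤ n - 1 - ((g j : Fin n) : ℕ) := by
      have hmaps : ∀ k ∈ Finset.Ioi j, g k ∈ Finset.Ioi (g j) := by
        intro k hk
        rw [Finset.mem_Ioi] at hk ⊢
        exact H j k hk (by omega)
      have hcard := Finset.card_le_card_of_injOn g hmaps hg.injOn
      simpa [Fin.card_Ioi] using hcard
    have hj1 := j.isLt
    have hj2 := (g j).isLt
    exact Fin.ext (by omega)
  refine ⟨h1, fun i hi => ?_⟩
  by_contra hcon
  push_neg at hcon
  have h2 := h1 (g i) hcon
  have h3 : g i = i := hg h2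
  rw [h3] at hcon
  omega

lemma myAuxExt (ω τ : Equiv.Perm (Fin n)) (h : ∀ i, ω.symm i = τ.symm i) : ω = τ := by
  have h2 : ω.symm = τ.symm := Equiv.ext h
  calc ω = ω.symm.symm := (Equiv.symm_symm ω).symm
    _ = τ.symm.symm := by rw [h2]
    _ = τ := Equiv.symm_symm τ

lemma myAuxPin (a b c : Fin n) (ha : (a : ℕ) = 0) (hb : (b : ℕ) = 1)
    (hc : (c : ℕ) = 2) (ω τ : Equiv.Perm (Fin n))
    (hω : ∀ i : Fin n, 3 ≤ (i : ℕ) → ω.symm i = i)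
    (hτ : ∀ i : Fin n, 3 ≤ (i : ℕ) → τ.symm i = i)
    (h0 : ((ω.symm a : Fin n) : ℕ) = ((τ.symm a : Fin n) : ℕ))
    (h1 : ((ω.symm b : Fin n) : ℕ) = ((τ.symm b : Fin n) : ℕ))
    (h2 : ((ω.symm c : Fin n) : ℕ) = ((τ.symm c : Fin n) : ℕ)) : ω = τ := by
  apply myAuxExt
  intro i
  rcases lt_or_ge (i : ℕ) 3 with h | h
  · have : (i : ℕ) = 0 ∨ (i : ℕ) = 1 ∨ (i : ℕ) = 2 := by omega
    rcases this with h' | h' | h'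
    · have : i = a := Fin.ext (by omega)
      rw [this]; exact Fin.ext h0
    · have : i = b := Fin.ext (by omega)
      rw [this]; exact Fin.ext h1
    · have : i = c := Fin.ext (by omega)
      rw [this]; exact Fin.ext h2
  · rw [hω i h, hτ i h]

lemma myAuxH (hn : 3 ≤ n) (σ π ω : Equiv.Perm (Fin n))
    (hσf : ∀ i : Fin n, 3 ≤ (i : ℕ) → σ.symm i = i)
    (hσl : ∀ i : Fin n, (i : ℕ) < 3 → ((σ.symm i : Fin n) : ℕ) < 3)
    (hπf : ∀ i : Fin n, 3 ≤ (i : ℕ) → π.symm i = i)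
    (hπl : ∀ i : Fin n, (i : ℕ) < 3 → ((π.symm i : Fin n) : ℕ) < 3)
    (hbtw : Between σ ω π) :
    (∀ j : Fin n, 3 ≤ (j : ℕ) → ω.symm j = j) ∧
      (∀ i : Fin n, (i : ℕ) < 3 → ((ω.symm i : Fin n) : ℕ) < 3) := by
  apply myAuxFix hn _ ω.symm.injective
  intro i j hij h3
  apply hbtw i j (ne_of_lt hij)
  constructor
  · rcases lt_or_ge (i : ℕ) 3 with h | h
    · rw [Fin.lt_def, hσf j h3]
      exact lt_of_lt_of_le (hσl i h) h3
    · rw [hσf i h, hσf j h3]; exact hij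
  · rcases lt_or_ge (i : ℕ) 3 with h | h
    · rw [Fin.lt_def, hπf j h3]
      exact lt_of_lt_of_le (hπl i h) h3
    · rw [hπf i h, hπf j h3]; exact hij

lemma myAuxStep {E : Type*} [AddCommGroup E] [Module ℝ E] (p u x y z : E) (aa bb t : ℝ)
    (hx : x = p + aa • u) (hy : y = p + bb • u) (ht0 : 0 < t) (ht1 : t < 1) (hab : aa < bb)
    (h : y = x + t • (z - x)) :
    ∃ cc : ℝ, z = p + cc • u ∧ bb < cc := by
  refine ⟨aa + (bb - aa) / t, ?_, ?_⟩
  have key : t • (z - x) = (bb - aa) • u := by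
    have hyx : y - x = (bb - aa) • u := by
      rw [hx, hy, sub_smul]; abel
    rw [← hyx, h]; abel
  have h2 : z - x = ((bb - aa) / t) • u := by
    have h3 := congrArg (fun w => t⁻¹ • w) key
    simp only [inv_smul_smul₀ ht0.ne'] at h3
    rw [h3, smul_smul, div_eq_inv_mul]
  · have hz : z = x + ((bb - aa) / t) • u := by rw [← h2]; abel
    rw [hz, hx, add_smul]; abel
  · have hlt : bb - aa < (bb - aa) / t := by
      rw [lt_div_iff₀ ht0]
      nlinarith
    linarith

end MyAux

theorem stmt10 (n : ℕ) (hn : 3 ≤ n)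
    (d : Equiv.Perm (Fin n) → Equiv.Perm (Fin n) → ℝ) (hd : IsMetricFn d)
    (hA3 : AxA3 d)
    (E : Type*) [NormedAddCommGroup E] [NormedSpace ℝ E]
    (hE : ∀ (x y : E) (l : ℝ), x ≠ y → ‖x‖ = 1 → ‖y‖ = 1 → 0 < l → l < 1 →
      ‖l • x + (1 - l) • y‖ < 1) :
    ¬ ∃ f : Equiv.Perm (Fin n) → E, ∀ σ π, ‖f σ - f π‖ = d σ π := by
  rintro ⟨f, hf⟩
  obtain ⟨⟨hnn, hsymm, hzero, htri⟩, hsep⟩ := hd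
  letI : StrictConvexSpace ℝ E := StrictConvexSpace.of_norm_combo_lt_one
    (fun x y hx hy hxy => ⟨1/2, 1/2, by norm_num, by
      have h := hE x y (1/2) hxy hx hy (by norm_num) (by norm_num)
      have h12 : (1 : ℝ) - 1/2 = 1/2 := by norm_num
      rwa [h12] at h⟩)
  have dpos : ∀ σ π : Equiv.Perm (Fin n), σ ≠ π → 0 < d σ π := fun σ π hne =>
    (hnn σ π).lt_of_ne (fun h => hne (hsep σ π h.symm))
  have fne : ∀ σ π : Equiv.Perm (Fin n), σ ≠ π → f σ ≠ f π := by
    intro σ π h hfe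
    exact (dpos σ π h).ne' (by rw [← hf σ π, hfe, sub_self, norm_zero])
  have fseg : ∀ σ π ω : Equiv.Perm (Fin n), ω ≠ σ → ω ≠ π →
      d σ π = d σ ω + d ω π →
      ∃ t : ℝ, 0 < t ∧ t < 1 ∧ f ω = f σ + t • (f π - f σ) := by
    intro σ π ω h1 h2 heq
    have hdist : dist (f σ) (f ω) + dist (f ω) (f π) = dist (f σ) (f π) := by
      simp only [dist_eq_norm, hf]
      linarith
    have hseg : f ω ∈ segment ℝ (f σ) (f π) :=
      mem_segment_iff_wbtw.mpr (dist_add_dist_eq_iff.mp hdist)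
    rw [segment_eq_image'] at hseg
    obtain ⟨t, ht, hteq0⟩ := hseg
    have hteq : f σ + t • (f π - f σ) = f ω := hteq0
    simp only [Set.mem_Icc] at ht
    have hne1 : f ω ≠ f σ := fne ω σ h1
    have hne2 : f ω ≠ f π := fne ω π h2
    have htne0 : t ≠ 0 := by
      intro h0
      apply hne1
      rw [← hteq, h0]; simp
    have htne1 : t ≠ 1 := by
      intro h0
      apply hne2
      rw [← hteq, h0]; simp
    exact ⟨t, ht.1.lt_of_ne (Ne.symm htne0), ht.2.lt_of_ne htne1, hteq.symm⟩
  -- the three relevant candidates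
  obtain ⟨a, ha⟩ : ∃ a : Fin n, (a : ℕ) = 0 := ⟨⟨0, by omega⟩, rfl⟩
  obtain ⟨b, hb⟩ : ∃ b : Fin n, (b : ℕ) = 1 := ⟨⟨1, by omega⟩, rfl⟩
  obtain ⟨c, hc⟩ : ∃ c : Fin n, (c : ℕ) = 2 := ⟨⟨2, by omega⟩, rfl⟩
  have hab : a ≠ b := fun h => by rw [h] at ha; omega
  have hac : a ≠ c := fun h => by rw [h] at ha; omega
  have hbc : b ≠ c := fun h => by rw [h] at hb; omega
  have hba := hab.symm
  have hca := hac.symm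
  have hcb := hbc.symm
  have hab' : a < b := by rw [Fin.lt_def]; omega
  have hac' : a < c := by rw [Fin.lt_def]; omega
  have hbc' : b < c := by rw [Fin.lt_def]; omega
  -- the six rankings
  obtain ⟨σ1, hσ1⟩ : ∃ σ : Equiv.Perm (Fin n), σ.symm = 1 := ⟨1, rfl⟩
  obtain ⟨σ2, hσ2⟩ : ∃ σ : Equiv.Perm (Fin n), σ.symm = Equiv.swap a b :=
    ⟨(Equiv.swap a b).symm, Equiv.symm_symm _⟩
  obtain ⟨σ3, hσ3⟩ : ∃ σ : Equiv.Perm (Fin n), σ.symm = Equiv.swap a b * Equiv.swap a c :=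
    ⟨(Equiv.swap a b * Equiv.swap a c).symm, Equiv.symm_symm _⟩
  obtain ⟨σ4, hσ4⟩ : ∃ σ : Equiv.Perm (Fin n), σ.symm = Equiv.swap a c :=
    ⟨(Equiv.swap a c).symm, Equiv.symm_symm _⟩
  obtain ⟨σ5, hσ5⟩ : ∃ σ : Equiv.Perm (Fin n), σ.symm = Equiv.swap a c * Equiv.swap a b :=
    ⟨(Equiv.swap a c * Equiv.swap a b).symm, Equiv.symm_symm _⟩
  obtain ⟨σ6, hσ6⟩ : ∃ σ : Equiv.Perm (Fin n), σ.symm = Equiv.swap b c :=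
    ⟨(Equiv.swap b c).symm, Equiv.symm_symm _⟩
  -- symm values
  have v1a : σ1.symm a = a := by rw [hσ1]; rfl
  have v1b : σ1.symm b = b := by rw [hσ1]; rfl
  have v1c : σ1.symm c = c := by rw [hσ1]; rfl
  have v2a : σ2.symm a = b := by rw [hσ2]; exact Equiv.swap_apply_left a b
  have v2b : σ2.symm b = a := by rw [hσ2]; exact Equiv.swap_apply_right a b
  have v2c : σ2.symm c = c := by rw [hσ2]; exact Equiv.swap_apply_of_ne_of_ne hca hcb
  have v3a : σ3.symm a = c := by
    rw [hσ3, Equiv.Perm.mul_apply, Equiv.swap_apply_left]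
    exact Equiv.swap_apply_of_ne_of_ne hca hcb
  have v3b : σ3.symm b = a := by
    rw [hσ3, Equiv.Perm.mul_apply, Equiv.swap_apply_of_ne_of_ne hba hbc]
    exact Equiv.swap_apply_right a b
  have v3c : σ3.symm c = b := by
    rw [hσ3, Equiv.Perm.mul_apply, Equiv.swap_apply_right]
    exact Equiv.swap_apply_left a b
  have v4a : σ4.symm a = c := by rw [hσ4]; exact Equiv.swap_apply_left a c
  have v4b : σ4.symm b = b := by rw [hσ4]; exact Equiv.swap_apply_of_ne_of_ne hba hbc
  have v4c : σ4.symm c = a := by rw [hσ4]; exact Equiv.swap_apply_right a c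
  have v5a : σ5.symm a = b := by
    rw [hσ5, Equiv.Perm.mul_apply, Equiv.swap_apply_left]
    exact Equiv.swap_apply_of_ne_of_ne hba hbc
  have v5b : σ5.symm b = c := by
    rw [hσ5, Equiv.Perm.mul_apply, Equiv.swap_apply_right]
    exact Equiv.swap_apply_left a c
  have v5c : σ5.symm c = a := by
    rw [hσ5, Equiv.Perm.mul_apply, Equiv.swap_apply_of_ne_of_ne hca hcb]
    exact Equiv.swap_apply_right a c
  have v6a : σ6.symm a = a := by rw [hσ6]; exact Equiv.swap_apply_of_ne_of_ne hab hac
  have v6b : σ6.symm b = c := by rw [hσ6]; exact Equiv.swap_apply_left b c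
  have v6c : σ6.symm c = b := by rw [hσ6]; exact Equiv.swap_apply_right b c
  -- fixing large elements
  have fixswap : ∀ x y : Fin n, (x : ℕ) < 3 → (y : ℕ) < 3 →
      ∀ i : Fin n, 3 ≤ (i : ℕ) → Equiv.swap x y i = i := by
    intro x y hx hy i hi
    apply Equiv.swap_apply_of_ne_of_ne
    · intro h; rw [h] at hi; omega
    · intro h; rw [h] at hi; omega
  have f1 : ∀ i : Fin n, 3 ≤ (i : ℕ) → σ1.symm i = i := by intro i _; rw [hσ1]; rfl
  have f2 : ∀ i : Fin n, 3 ≤ (i : ℕ) → σ2.symm i = i := by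
    intro i hi; rw [hσ2]; exact fixswap a b (by omega) (by omega) i hi
  have f3 : ∀ i : Fin n, 3 ≤ (i : ℕ) → σ3.symm i = i := by
    intro i hi
    rw [hσ3, Equiv.Perm.mul_apply, fixswap a c (by omega) (by omega) i hi,
      fixswap a b (by omega) (by omega) i hi]
  have f4 : ∀ i : Fin n, 3 ≤ (i : ℕ) → σ4.symm i = i := by
    intro i hi; rw [hσ4]; exact fixswap a c (by omega) (by omega) i hi
  have f5 : ∀ i : Fin n, 3 ≤ (i : ℕ) → σ5.symm i = i := by
    intro i hi
    rw [hσ5, Equiv.Perm.mul_apply, fixswap a b (by omega) (by omega) i hi,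
      fixswap a c (by omega) (by omega) i hi]
  have f6 : ∀ i : Fin n, 3 ≤ (i : ℕ) → σ6.symm i = i := by
    intro i hi; rw [hσ6]; exact fixswap b c (by omega) (by omega) i hi
  -- small values stay small
  have lt3 : ∀ σ : Equiv.Perm (Fin n), ((σ.symm a : Fin n) : ℕ) < 3 →
      ((σ.symm b : Fin n) : ℕ) < 3 → ((σ.symm c : Fin n) : ℕ) < 3 →
      ∀ i : Fin n, (i : ℕ) < 3 → ((σ.symm i : Fin n) : ℕ) < 3 := by
    intro σ h1 h2 h3 i hi
    have : (i : ℕ) = 0 ∨ (i : ℕ) = 1 ∨ (i : ℕ) = 2 := by omega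
    rcases this with h | h | h
    · have hia : i = a := Fin.ext (by omega)
      rw [hia]; exact h1
    · have hib : i = b := Fin.ext (by omega)
      rw [hib]; exact h2
    · have hic : i = c := Fin.ext (by omega)
      rw [hic]; exact h3
  have l1 := lt3 σ1 (by rw [v1a]; omega) (by rw [v1b]; omega) (by rw [v1c]; omega)
  have l2 := lt3 σ2 (by rw [v2a]; omega) (by rw [v2b]; omega) (by rw [v2c]; omega)
  have l3 := lt3 σ3 (by rw [v3a]; omega) (by rw [v3b]; omega) (by rw [v3c]; omega)
  have l4 := lt3 σ4 (by rw [v4a]; omega) (by rw [v4b]; omega) (by rw [v4c]; omega)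
  have l5 := lt3 σ5 (by rw [v5a]; omega) (by rw [v5b]; omega) (by rw [v5c]; omega)
  have l6 := lt3 σ6 (by rw [v6a]; omega) (by rw [v6b]; omega) (by rw [v6c]; omega)
  -- kendall bounds
  have hk13 : 2 ≤ kendall σ1 σ3 := by
    have m1 : (a, b) ∈ inversions σ1 σ3 := by
      simp only [inversions, Finset.mem_filter, Finset.mem_univ, true_and]
      exact ⟨by rw [v1a, v1b]; exact hab', by rw [v3a, v3b]; exact hac'⟩
    have m2 : (a, c) ∈ inversions σ1 σ3 := by
      simp only [inversions, Finset.mem_filter, Finset.mem_univ, true_and]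
      exact ⟨by rw [v1a, v1c]; exact hac', by rw [v3a, v3c]; exact hbc'⟩
    exact Finset.one_lt_card_iff.mpr
      ⟨_, _, m1, m2, fun h => hbc (congrArg Prod.snd h)⟩
  have hk24 : 2 ≤ kendall σ2 σ4 := by
    have m1 : (a, c) ∈ inversions σ2 σ4 := by
      simp only [inversions, Finset.mem_filter, Finset.mem_univ, true_and]
      exact ⟨by rw [v2a, v2c]; exact hbc', by rw [v4a, v4c]; exact hac'⟩
    have m2 : (b, c) ∈ inversions σ2 σ4 := by
      simp only [inversions, Finset.mem_filter, Finset.mem_univ, true_and]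
      exact ⟨by rw [v2b, v2c]; exact hac', by rw [v4b, v4c]; exact hab'⟩
    exact Finset.one_lt_card_iff.mpr
      ⟨_, _, m1, m2, fun h => hab (congrArg Prod.fst h)⟩
  have hk35 : 2 ≤ kendall σ3 σ5 := by
    have m1 : (b, a) ∈ inversions σ3 σ5 := by
      simp only [inversions, Finset.mem_filter, Finset.mem_univ, true_and]
      exact ⟨by rw [v3b, v3a]; exact hac', by rw [v5a, v5b]; exact hbc'⟩
    have m2 : (b, c) ∈ inversions σ3 σ5 := by
      simp only [inversions, Finset.mem_filter, Finset.mem_univ, true_and]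
      exact ⟨by rw [v3b, v3c]; exact hab', by rw [v5c, v5b]; exact hac'⟩
    exact Finset.one_lt_card_iff.mpr
      ⟨_, _, m1, m2, fun h => hac (congrArg Prod.snd h)⟩
  have hk46 : 2 ≤ kendall σ4 σ6 := by
    have m1 : (c, a) ∈ inversions σ4 σ6 := by
      simp only [inversions, Finset.mem_filter, Finset.mem_univ, true_and]
      exact ⟨by rw [v4c, v4a]; exact hac', by rw [v6a, v6c]; exact hab'⟩
    have m2 : (b, a) ∈ inversions σ4 σ6 := by
      simp only [inversions, Finset.mem_filter, Finset.mem_univ, true_and]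
      exact ⟨by rw [v4b, v4a]; exact hbc', by rw [v6a, v6b]; exact hac'⟩
    exact Finset.one_lt_card_iff.mpr
      ⟨_, _, m1, m2, fun h => hbc (congrArg Prod.fst h).symm⟩
  have hk51 : 2 ≤ kendall σ5 σ1 := by
    have m1 : (c, a) ∈ inversions σ5 σ1 := by
      simp only [inversions, Finset.mem_filter, Finset.mem_univ, true_and]
      exact ⟨by rw [v5c, v5a]; exact hab', by rw [v1a, v1c]; exact hac'⟩
    have m2 : (c, b) ∈ inversions σ5 σ1 := by
      simp only [inversions, Finset.mem_filter, Finset.mem_univ, true_and]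
      exact ⟨by rw [v5c, v5b]; exact hac', by rw [v1b, v1c]; exact hbc'⟩
    exact Finset.one_lt_card_iff.mpr
      ⟨_, _, m1, m2, fun h => hab (congrArg Prod.snd h)⟩
  -- pair 1 : between σ1 and σ3 the middle is σ2
  obtain ⟨ω1, hω1ne1, hω1ne3, hbtw1, hdeq1⟩ := hA3 σ1 σ3 hk13
  obtain ⟨fx1, lx1⟩ := myAuxH hn σ1 σ3 ω1 f1 l1 f3 l3 hbtw1
  have hval1 : ((ω1.symm a : Fin n) : ℕ) = 1 ∧ ((ω1.symm b : Fin n) : ℕ) = 0 ∧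
      ((ω1.symm c : Fin n) : ℕ) = 2 := by
    have hcon : ((ω1.symm b : Fin n) : ℕ) < ((ω1.symm c : Fin n) : ℕ) :=
      Fin.lt_def.mp (hbtw1 b c hbc ⟨by rw [v1b, v1c]; exact hbc', by rw [v3b, v3c]; exact hab'⟩)
    have x0 := lx1 a (by omega)
    have y0 := lx1 b (by omega)
    have z0 := lx1 c (by omega)
    have dxy : ((ω1.symm a : Fin n) : ℕ) ≠ ((ω1.symm b : Fin n) : ℕ) :=
      fun h => hab (ω1.symm.injective (Fin.ext h))
    have dxz : ((ω1.symm a : Fin n) : ℕ) ≠ ((ω1.symm c : Fin n) : ℕ) :=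
      fun h => hac (ω1.symm.injective (Fin.ext h))
    have dyz : ((ω1.symm b : Fin n) : ℕ) ≠ ((ω1.symm c : Fin n) : ℕ) :=
      fun h => hbc (ω1.symm.injective (Fin.ext h))
    have ex1 : ¬(((ω1.symm a : Fin n) : ℕ) = 0 ∧ ((ω1.symm b : Fin n) : ℕ) = 1 ∧
        ((ω1.symm c : Fin n) : ℕ) = 2) := by
      rintro ⟨e1, e2, e3⟩
      refine hω1ne1 (myAuxPin a b c ha hb hc ω1 σ1 fx1 f1 ?_ ?_ ?_)
      · rw [v1a]; omega
      · rw [v1b]; omega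
      · rw [v1c]; omega
    have ex3 : ¬(((ω1.symm a : Fin n) : ℕ) = 2 ∧ ((ω1.symm b : Fin n) : ℕ) = 0 ∧
        ((ω1.symm c : Fin n) : ℕ) = 1) := by
      rintro ⟨e1, e2, e3⟩
      refine hω1ne3 (myAuxPin a b c ha hb hc ω1 σ3 fx1 f3 ?_ ?_ ?_)
      · rw [v3a]; omega
      · rw [v3b]; omega
      · rw [v3c]; omega
    omega
  have hωσ2 : ω1 = σ2 := by
    refine myAuxPin a b c ha hb hc ω1 σ2 fx1 f2 ?_ ?_ ?_
    · rw [v2a]; omega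
    · rw [v2b]; omega
    · rw [v2c]; omega
  rw [hωσ2] at hdeq1 hω1ne1 hω1ne3
  -- pair 2 : between σ2 and σ4 the middle is σ3
  obtain ⟨ω2, hω2ne1, hω2ne3, hbtw2, hdeq2⟩ := hA3 σ2 σ4 hk24
  obtain ⟨fx2, lx2⟩ := myAuxH hn σ2 σ4 ω2 f2 l2 f4 l4 hbtw2
  have hval2 : ((ω2.symm a : Fin n) : ℕ) = 2 ∧ ((ω2.symm b : Fin n) : ℕ) = 0 ∧
      ((ω2.symm c : Fin n) : ℕ) = 1 := by
    have hcon : ((ω2.symm b : Fin n) : ℕ) < ((ω2.symm a : Fin n) : ℕ) :=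
      Fin.lt_def.mp (hbtw2 b a hba ⟨by rw [v2b, v2a]; exact hab', by rw [v4b, v4a]; exact hbc'⟩)
    have x0 := lx2 a (by omega)
    have y0 := lx2 b (by omega)
    have z0 := lx2 c (by omega)
    have dxy : ((ω2.symm a : Fin n) : ℕ) ≠ ((ω2.symm b : Fin n) : ℕ) :=
      fun h => hab (ω2.symm.injective (Fin.ext h))
    have dxz : ((ω2.symm a : Fin n) : ℕ) ≠ ((ω2.symm c : Fin n) : ℕ) :=
      fun h => hac (ω2.symm.injective (Fin.ext h))
    have dyz : ((ω2.symm b : Fin n) : ℕ) ≠ ((ω2.symm c : Fin n) : ℕ) :=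
      fun h => hbc (ω2.symm.injective (Fin.ext h))
    have ex1 : ¬(((ω2.symm a : Fin n) : ℕ) = 1 ∧ ((ω2.symm b : Fin n) : ℕ) = 0 ∧
        ((ω2.symm c : Fin n) : ℕ) = 2) := by
      rintro ⟨e1, e2, e3⟩
      refine hω2ne1 (myAuxPin a b c ha hb hc ω2 σ2 fx2 f2 ?_ ?_ ?_)
      · rw [v2a]; omega
      · rw [v2b]; omega
      · rw [v2c]; omega
    have ex3 : ¬(((ω2.symm a : Fin n) : ℕ) = 2 ∧ ((ω2.symm b : Fin n) : ℕ) = 1 ∧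
        ((ω2.symm c : Fin n) : ℕ) = 0) := by
      rintro ⟨e1, e2, e3⟩
      refine hω2ne3 (myAuxPin a b c ha hb hc ω2 σ4 fx2 f4 ?_ ?_ ?_)
      · rw [v4a]; omega
      · rw [v4b]; omega
      · rw [v4c]; omega
    omega
  have hωσ3 : ω2 = σ3 := by
    refine myAuxPin a b c ha hb hc ω2 σ3 fx2 f3 ?_ ?_ ?_
    · rw [v3a]; omega
    · rw [v3b]; omega
    · rw [v3c]; omega
  rw [hωσ3] at hdeq2 hω2ne1 hω2ne3
  -- pair 3 : between σ3 and σ5 the middle is σ4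
  obtain ⟨ω3, hω3ne1, hω3ne3, hbtw3, hdeq3⟩ := hA3 σ3 σ5 hk35
  obtain ⟨fx3, lx3⟩ := myAuxH hn σ3 σ5 ω3 f3 l3 f5 l5 hbtw3
  have hval3 : ((ω3.symm a : Fin n) : ℕ) = 2 ∧ ((ω3.symm b : Fin n) : ℕ) = 1 ∧
      ((ω3.symm c : Fin n) : ℕ) = 0 := by
    have hcon : ((ω3.symm c : Fin n) : ℕ) < ((ω3.symm a : Fin n) : ℕ) :=
      Fin.lt_def.mp (hbtw3 c a hca ⟨by rw [v3c, v3a]; exact hbc', by rw [v5c, v5a]; exact hab'⟩)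
    have x0 := lx3 a (by omega)
    have y0 := lx3 b (by omega)
    have z0 := lx3 c (by omega)
    have dxy : ((ω3.symm a : Fin n) : ℕ) ≠ ((ω3.symm b : Fin n) : ℕ) :=
      fun h => hab (ω3.symm.injective (Fin.ext h))
    have dxz : ((ω3.symm a : Fin n) : ℕ) ≠ ((ω3.symm c : Fin n) : ℕ) :=
      fun h => hac (ω3.symm.injective (Fin.ext h))
    have dyz : ((ω3.symm b : Fin n) : ℕ) ≠ ((ω3.symm c : Fin n) : ℕ) :=
      fun h => hbc (ω3.symm.injective (Fin.ext h))
    have ex1 : ¬(((ω3.symm a : Fin n) : ℕ) = 2 ∧ ((ω3.symm b : Fin n) : ℕ) = 0 ∧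
        ((ω3.symm c : Fin n) : ℕ) = 1) := by
      rintro ⟨e1, e2, e3⟩
      refine hω3ne1 (myAuxPin a b c ha hb hc ω3 σ3 fx3 f3 ?_ ?_ ?_)
      · rw [v3a]; omega
      · rw [v3b]; omega
      · rw [v3c]; omega
    have ex3 : ¬(((ω3.symm a : Fin n) : ℕ) = 1 ∧ ((ω3.symm b : Fin n) : ℕ) = 2 ∧
        ((ω3.symm c : Fin n) : ℕ) = 0) := by
      rintro ⟨e1, e2, e3⟩
      refine hω3ne3 (myAuxPin a b c ha hb hc ω3 σ5 fx3 f5 ?_ ?_ ?_)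
      · rw [v5a]; omega
      · rw [v5b]; omega
      · rw [v5c]; omega
    omega
  have hωσ4 : ω3 = σ4 := by
    refine myAuxPin a b c ha hb hc ω3 σ4 fx3 f4 ?_ ?_ ?_
    · rw [v4a]; omega
    · rw [v4b]; omega
    · rw [v4c]; omega
  rw [hωσ4] at hdeq3 hω3ne1 hω3ne3
  -- pair 4 : between σ4 and σ6 the middle is σ5
  obtain ⟨ω4, hω4ne1, hω4ne3, hbtw4, hdeq4⟩ := hA3 σ4 σ6 hk46
  obtain ⟨fx4, lx4⟩ := myAuxH hn σ4 σ6 ω4 f4 l4 f6 l6 hbtw4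
  have hval4 : ((ω4.symm a : Fin n) : ℕ) = 1 ∧ ((ω4.symm b : Fin n) : ℕ) = 2 ∧
      ((ω4.symm c : Fin n) : ℕ) = 0 := by
    have hcon : ((ω4.symm c : Fin n) : ℕ) < ((ω4.symm b : Fin n) : ℕ) :=
      Fin.lt_def.mp (hbtw4 c b hcb ⟨by rw [v4c, v4b]; exact hab', by rw [v6c, v6b]; exact hbc'⟩)
    have x0 := lx4 a (by omega)
    have y0 := lx4 b (by omega)
    have z0 := lx4 c (by omega)
    have dxy : ((ω4.symm a : Fin n) : ℕ) ≠ ((ω4.symm b : Fin n) : ℕ) :=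
      fun h => hab (ω4.symm.injective (Fin.ext h))
    have dxz : ((ω4.symm a : Fin n) : ℕ) ≠ ((ω4.symm c : Fin n) : ℕ) :=
      fun h => hac (ω4.symm.injective (Fin.ext h))
    have dyz : ((ω4.symm b : Fin n) : ℕ) ≠ ((ω4.symm c : Fin n) : ℕ) :=
      fun h => hbc (ω4.symm.injective (Fin.ext h))
    have ex1 : ¬(((ω4.symm a : Fin n) : ℕ) = 2 ∧ ((ω4.symm b : Fin n) : ℕ) = 1 ∧
        ((ω4.symm c : Fin n) : ℕ) = 0) := by
      rintro ⟨e1, e2, e3⟩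
      refine hω4ne1 (myAuxPin a b c ha hb hc ω4 σ4 fx4 f4 ?_ ?_ ?_)
      · rw [v4a]; omega
      · rw [v4b]; omega
      · rw [v4c]; omega
    have ex3 : ¬(((ω4.symm a : Fin n) : ℕ) = 0 ∧ ((ω4.symm b : Fin n) : ℕ) = 2 ∧
        ((ω4.symm c : Fin n) : ℕ) = 1) := by
      rintro ⟨e1, e2, e3⟩
      refine hω4ne3 (myAuxPin a b c ha hb hc ω4 σ6 fx4 f6 ?_ ?_ ?_)
      · rw [v6a]; omega
      · rw [v6b]; omega
      · rw [v6c]; omega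
    omega
  have hωσ5 : ω4 = σ5 := by
    refine myAuxPin a b c ha hb hc ω4 σ5 fx4 f5 ?_ ?_ ?_
    · rw [v5a]; omega
    · rw [v5b]; omega
    · rw [v5c]; omega
  rw [hωσ5] at hdeq4 hω4ne1 hω4ne3
  -- pair 5 : between σ5 and σ1 the middle is σ6
  obtain ⟨ω5, hω5ne1, hω5ne3, hbtw5, hdeq5⟩ := hA3 σ5 σ1 hk51
  obtain ⟨fx5, lx5⟩ := myAuxH hn σ5 σ1 ω5 f5 l5 f1 l1 hbtw5
  have hval5 : ((ω5.symm a : Fin n) : ℕ) = 0 ∧ ((ω5.symm b : Fin n) : ℕ) = 2 ∧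
      ((ω5.symm c : Fin n) : ℕ) = 1 := by
    have hcon : ((ω5.symm a : Fin n) : ℕ) < ((ω5.symm b : Fin n) : ℕ) :=
      Fin.lt_def.mp (hbtw5 a b hab ⟨by rw [v5a, v5b]; exact hbc', by rw [v1a, v1b]; exact hab'⟩)
    have x0 := lx5 a (by omega)
    have y0 := lx5 b (by omega)
    have z0 := lx5 c (by omega)
    have dxy : ((ω5.symm a : Fin n) : ℕ) ≠ ((ω5.symm b : Fin n) : ℕ) :=
      fun h => hab (ω5.symm.injective (Fin.ext h))
    have dxz : ((ω5.symm a : Fin n) : ℕ) ≠ ((ω5.symm c : Fin n) : ℕ) :=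
      fun h => hac (ω5.symm.injective (Fin.ext h))
    have dyz : ((ω5.symm b : Fin n) : ℕ) ≠ ((ω5.symm c : Fin n) : ℕ) :=
      fun h => hbc (ω5.symm.injective (Fin.ext h))
    have ex1 : ¬(((ω5.symm a : Fin n) : ℕ) = 1 ∧ ((ω5.symm b : Fin n) : ℕ) = 2 ∧
        ((ω5.symm c : Fin n) : ℕ) = 0) := by
      rintro ⟨e1, e2, e3⟩
      refine hω5ne1 (myAuxPin a b c ha hb hc ω5 σ5 fx5 f5 ?_ ?_ ?_)
      · rw [v5a]; omega
      · rw [v5b]; omega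
      · rw [v5c]; omega
    have ex3 : ¬(((ω5.symm a : Fin n) : ℕ) = 0 ∧ ((ω5.symm b : Fin n) : ℕ) = 1 ∧
        ((ω5.symm c : Fin n) : ℕ) = 2) := by
      rintro ⟨e1, e2, e3⟩
      refine hω5ne3 (myAuxPin a b c ha hb hc ω5 σ1 fx5 f1 ?_ ?_ ?_)
      · rw [v1a]; omega
      · rw [v1b]; omega
      · rw [v1c]; omega
    omega
  have hωσ6 : ω5 = σ6 := by
    refine myAuxPin a b c ha hb hc ω5 σ6 fx5 f6 ?_ ?_ ?_
    · rw [v6a]; omega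
    · rw [v6b]; omega
    · rw [v6c]; omega
  rw [hωσ6] at hdeq5 hω5ne1 hω5ne3
  -- now the geometry
  obtain ⟨t1, ht10, ht11, he1⟩ := fseg σ1 σ3 σ2 hω1ne1 hω1ne3 hdeq1
  obtain ⟨t2, ht20, ht21, he2⟩ := fseg σ2 σ4 σ3 hω2ne1 hω2ne3 hdeq2
  obtain ⟨t3, ht30, ht31, he3⟩ := fseg σ3 σ5 σ4 hω3ne1 hω3ne3 hdeq3
  obtain ⟨t4, ht40, ht41, he4⟩ := fseg σ4 σ6 σ5 hω4ne1 hω4ne3 hdeq4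
  obtain ⟨t5, ht50, ht51, he5⟩ := fseg σ5 σ1 σ6 hω5ne1 hω5ne3 hdeq5
  have hσ13 : σ1 ≠ σ3 := by
    intro h
    apply hac
    have h2 := v3a
    rw [← h, v1a] at h2
    exact h2
  have hu : f σ3 - f σ1 ≠ 0 := sub_ne_zero.mpr (fne σ3 σ1 (Ne.symm hσ13))
  have hp2 : f σ2 = f σ1 + t1 • (f σ3 - f σ1) := he1
  have hp3 : f σ3 = f σ1 + (1 : ℝ) • (f σ3 - f σ1) := by rw [one_smul]; abel
  obtain ⟨s4, hp4, hs4⟩ := myAuxStep (f σ1) (f σ3 - f σ1) (f σ2) (f σ3) (f σ4)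
    t1 1 t2 hp2 hp3 ht20 ht21 ht11 he2
  obtain ⟨s5, hp5, hs5⟩ := myAuxStep (f σ1) (f σ3 - f σ1) (f σ3) (f σ4) (f σ5)
    1 s4 t3 hp3 hp4 ht30 ht31 hs4 he3
  obtain ⟨s6, hp6, hs6⟩ := myAuxStep (f σ1) (f σ3 - f σ1) (f σ4) (f σ5) (f σ6)
    s4 s5 t4 hp4 hp5 ht40 ht41 hs5 he4
  obtain ⟨s7, hp1, hs1⟩ := myAuxStep (f σ1) (f σ3 - f σ1) (f σ5) (f σ6) (f σ1)
    s5 s6 t5 hp5 hp6 ht50 ht51 hs6 he5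
  have hw0 : s7 • (f σ3 - f σ1) = 0 := left_eq_add.mp hp1
  rcases smul_eq_zero.mp hw0 with h | h
  · linarith
  · exact hu h
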